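/- The Shrikhande graph S — the simple graph on vertex set (ZMod 4) × (ZMod 4) in which u and v are adjacent if and only if u − v ∈ {(1,0), (3,0), (0,1), (0,3), (1,1), (3,3)} — is strongly regular with parameters (16, 6, 2, 2): it has 16 vertices, is 6-regular, every pair of adjacent vertices has exactly 2 common neighbors, and every pair of distinct non-adjacent vertices has exactly 2 common neighbors. -/

import Mathlib

open SimpleGraph

/-- The connection set of the Shrikhande graph. -/
def shrikhandeSet : Finset (ZMod 4 × ZMod 4) :=
  {(1, 0), (3, 0), (0, 1), (0, 3), (1, 1), (3, 3)}

private lemma shrikhande_symm : ∀ u v : ZMod 4 × ZMod 4,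
    u - v ∈ shrikhandeSet → v - u ∈ shrikhandeSet := by decide

private lemma shrikhande_irrefl : ∀ u : ZMod 4 × ZMod 4, u - u ∉ shrikhandeSet := by decide

/-- The Shrikhande graph: vertices are `(ZMod 4) × (ZMod 4)` and `u` is adjacent to `v`
iff `u - v ∈ {(1,0), (3,0), (0,1), (0,3), (1,1), (3,3)}`. -/
def shrikhandeGraph : SimpleGraph (ZMod 4 × ZMod 4) where
  Adj u v := u - v ∈ shrikhandeSet
  symm := ⟨fun u v h => shrikhande_symm u v h⟩
  loopless := ⟨fun u h => shrikhande_irrefl u h⟩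

instance : DecidableRel shrikhandeGraph.Adj := fun u v =>
  inferInstanceAs (Decidable (u - v ∈ shrikhandeSet))

private lemma aux_card (v w : ZMod 4 × ZMod 4) :
    Fintype.card (shrikhandeGraph.commonNeighbors v w) =
    ((shrikhandeGraph.neighborFinset v) ∩ (shrikhandeGraph.neighborFinset w)).card := by
  rw [← Set.toFinset_card]
  congr 1
  ext x
  rw [Set.mem_toFinset]
  simp [SimpleGraph.commonNeighbors]

set_option maxRecDepth 4000 in
theorem stmt6 : shrikhandeGraph.IsSRGWith 16 6 2 2 := by
  refine ⟨by decide, ?_, ?_, ?_⟩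
  · intro v
    rw [SimpleGraph.degree]
    revert v
    decide
  · intro v w h
    rw [aux_card]
    revert h
    revert v w
    decide
  · intro v w hne h
    rw [aux_card]
    revert h
    revert hne
    revert v w
    decide
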